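/- Let m ≥ 5 be odd, G(w) = w + (−3,0,0,1,1) + e_{p(Z(w))} on A_m, and Σ = {w ∈ A_m : w_0 = 0, w_3 = 0, w_4 ≠ 0}. The orbit of x* = (0, 0, −1, 0, 1) first returns to Σ after exactly m^3 − (m−1)(m−2) steps, at the point (0, 1, 0, 0, −1). -/

import Mathlib

def zeroSet {m : ℕ} (w : Fin 5 → ZMod m) : Finset (Fin 5) :=
  Finset.univ.filter (fun i => w i = 0)

def sel (Z : Finset (Fin 5)) : Fin 5 :=
  if Z = {3} then 4 else if Z = {4} then 1
  else if Z = {0,3} then 2 else if Z = {0,4} then 1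
  else if Z = {1,2} then 4 else if Z = {1,3} then 4
  else if Z = {1,4} then 1 else if Z = {2,3} then 1
  else if Z = {2,4} then 3 else if Z = {3,4} then 4
  else if Z = {0,1,2} then 4 else if Z = {0,1,3} then 2
  else if Z = {0,1,4} then 1 else if Z = {0,2,3} then 2
  else if Z = {0,2,4} then 3 else if Z = {0,3,4} then 1
  else if Z = {1,2,3} then 1 else if Z = {1,2,4} then 4
  else if Z = {1,3,4} then 4 else if Z = {2,3,4} then 3
  else 0

def eVec (m : ℕ) (i : Fin 5) : Fin 5 → ZMod m := fun j => if j = i then 1 else 0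

def qVec (m : ℕ) (i : Fin 5) : Fin 5 → ZMod m :=
  fun j => (if j = i then 1 else 0) - (if j = (4 : Fin 5) then 1 else 0)

def Gmap (m : ℕ) (w : Fin 5 → ZMod m) : Fin 5 → ZMod m :=
  w + ![(-3 : ZMod m), 0, 0, 1, 1] + eVec m (sel (zeroSet w))

set_option linter.unnecessarySeqFocus false

def Wv (m : ℕ) (b x y : ZMod m) : Fin 5 → ZMod m := ![-(b+x+y), b, 0, x, y]

namespace LW
variable {m : ℕ}

lemma mem_zeroSet {w : Fin 5 → ZMod m} {i : Fin 5} : i ∈ zeroSet w ↔ w i = 0 := by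
  simp [zeroSet]

@[simp] lemma Wv0 (b x y : ZMod m) : Wv m b x y 0 = -(b+x+y) := rfl
@[simp] lemma Wv1 (b x y : ZMod m) : Wv m b x y 1 = b := rfl
@[simp] lemma Wv2 (b x y : ZMod m) : Wv m b x y 2 = 0 := rfl
@[simp] lemma Wv3 (b x y : ZMod m) : Wv m b x y 3 = x := rfl
@[simp] lemma Wv4 (b x y : ZMod m) : Wv m b x y 4 = y := rfl

lemma finish_vec (s : Fin 5) (b x y b' x' y' : ZMod m)
    (h0 : -(b+x+y) + (-3) + eVec m s 0 = -(b'+x'+y'))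
    (h1 : b + 0 + eVec m s 1 = b') (h2 : (0:ZMod m) + 0 + eVec m s 2 = 0)
    (h3 : x + 1 + eVec m s 3 = x') (h4 : y + 1 + eVec m s 4 = y') :
    (Wv m b x y) + ![(-3 : ZMod m), 0, 0, 1, 1] + eVec m s = Wv m b' x' y' := by
  funext i
  fin_cases i <;> simp only [Pi.add_apply] <;>
    first
    | exact (by simpa using h0)
    | exact (by simpa using h1)
    | exact (by simpa using h2)
    | exact (by simpa using h3)
    | exact (by simpa using h4)

lemma S0 (b x y : ZMod m) (hb : b ≠ 0) (hx : x ≠ 0) (hy : y ≠ 0) :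
    Gmap m (Wv m b x y) = Wv m b (x+1) (y+1) := by
  have hZ : sel (zeroSet (Wv m b x y)) = 0 := by
    by_cases h0 : b+x+y = 0
    · have : zeroSet (Wv m b x y) = {0,2} := by
        ext i; rw [mem_zeroSet]; fin_cases i <;> simp [hb, hx, hy] <;>
          first
          | decide
          | (linear_combination -h0)
      rw [this]; decide
    · have : zeroSet (Wv m b x y) = {2} := by
        ext i; rw [mem_zeroSet]; fin_cases i <;> simp [hb, hx, hy] <;>
          first
          | decide
          | (intro h; exact h0 (by linear_combination -h))
      rw [this]; decide
  rw [Gmap, hZ]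
  exact finish_vec 0 b x y b (x+1) (y+1) (by simp [eVec]; ring) (by simp [eVec])
    (by simp [eVec]) (by simp [eVec]) (by simp [eVec])

lemma S3 (b x : ZMod m) (hb : b ≠ 0) :
    Gmap m (Wv m b x 0) = Wv m b (x+2) 1 := by
  have hZ : sel (zeroSet (Wv m b x 0)) = 3 := by
    by_cases hx : x = 0
    · have h0 : b + x + 0 ≠ 0 := by simpa [hx] using hb
      have : zeroSet (Wv m b x 0) = {2,3,4} := by
        ext i; rw [mem_zeroSet]; fin_cases i <;> simp [hb, hx] <;>
          first
          | decide
          | (intro h; exact h0 (by linear_combination -h))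
      rw [this]; decide
    · by_cases h0 : b + x + 0 = 0
      · have : zeroSet (Wv m b x 0) = {0,2,4} := by
          ext i; rw [mem_zeroSet]; fin_cases i <;> simp [hb, hx] <;>
            first
            | decide
            | (linear_combination -h0)
        rw [this]; decide
      · have : zeroSet (Wv m b x 0) = {2,4} := by
          ext i; rw [mem_zeroSet]; fin_cases i <;> simp [hb, hx] <;>
            first
            | decide
            | (intro h; exact h0 (by linear_combination -h))
        rw [this]; decide
  rw [Gmap, hZ]
  exact finish_vec 3 b x 0 b (x+2) 1 (by simp [eVec]; ring) (by simp [eVec])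
    (by simp [eVec]) (by simp [eVec]; ring) (by simp [eVec])

lemma Sev (b y : ZMod m) (hy : y ≠ 0) (h0 : b + y ≠ 0) :
    Gmap m (Wv m b 0 y) = Wv m (b+1) 1 (y+1) := by
  have h0' : b + 0 + y ≠ 0 := by simpa using h0
  have hZ : sel (zeroSet (Wv m b 0 y)) = 1 := by
    by_cases hb : b = 0
    · have : zeroSet (Wv m b 0 y) = {1,2,3} := by
        ext i; rw [mem_zeroSet]; fin_cases i <;> simp [hb, hy] <;>
          first
          | decide
          | (intro h; exact h0' (by rw [hb]; linear_combination -h))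
      rw [this]; decide
    · have : zeroSet (Wv m b 0 y) = {2,3} := by
        ext i; rw [mem_zeroSet]; fin_cases i <;> simp [hb, hy] <;>
          first
          | decide
          | (intro h; exact h0' (by linear_combination -h))
      rw [this]; decide
  rw [Gmap, hZ]
  exact finish_vec 1 b 0 y (b+1) 1 (y+1) (by simp [eVec]; ring) (by simp [eVec])
    (by simp [eVec]) (by simp [eVec]) (by simp [eVec])

lemma S4 (x y : ZMod m) (hx : x ≠ 0) :
    Gmap m (Wv m 0 x y) = Wv m 0 (x+1) (y+2) := by
  have hZ : sel (zeroSet (Wv m 0 x y)) = 4 := by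
    by_cases hy : y = 0
    · have h0 : (0:ZMod m) + x + y ≠ 0 := by simpa [hy] using hx
      have : zeroSet (Wv m 0 x y) = {1,2,4} := by
        ext i; rw [mem_zeroSet]; fin_cases i <;> simp [hx, hy] <;>
          first
          | decide
          | (intro h; exact h0 (by linear_combination -h))
      rw [this]; decide
    · by_cases h0 : (0:ZMod m) + x + y = 0
      · have : zeroSet (Wv m 0 x y) = {0,1,2} := by
          ext i; rw [mem_zeroSet]; fin_cases i <;> simp [hx, hy] <;>
            first
            | decide
            | (linear_combination -h0)
        rw [this]; decide
      · have : zeroSet (Wv m 0 x y) = {1,2} := by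
          ext i; rw [mem_zeroSet]; fin_cases i <;> simp [hx, hy] <;>
            first
            | decide
            | (intro h; exact h0 (by linear_combination -h))
        rw [this]; decide
  rw [Gmap, hZ]
  exact finish_vec 4 0 x y 0 (x+1) (y+2) (by simp [eVec]; ring) (by simp [eVec])
    (by simp [eVec]) (by simp [eVec]) (by simp [eVec]; ring)

lemma Szero : Gmap m (Wv m 0 0 0) = Wv m 0 1 1 := by
  have hZ : sel (zeroSet (Wv m 0 0 0)) = 0 := by
    have : zeroSet (Wv m 0 0 0) = Finset.univ := by
      ext i; rw [mem_zeroSet]; fin_cases i <;> simp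
    rw [this]; decide
  rw [Gmap, hZ]
  exact finish_vec 0 0 0 0 0 1 1 (by simp [eVec]; ring) (by simp [eVec])
    (by simp [eVec]) (by simp [eVec]) (by simp [eVec])

lemma Sstart (h1 : (1:ZMod m) ≠ 0) :
    Gmap m ![0, 0, -1, 0, 1] = Wv m 0 1 2 := by
  have hn1 : (-1 : ZMod m) ≠ 0 := by simpa using h1
  have hZ : sel (zeroSet (![0, 0, -1, 0, 1] : Fin 5 → ZMod m)) = 2 := by
    have : zeroSet (![0, 0, -1, 0, 1] : Fin 5 → ZMod m) = {0,1,3} := by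
      ext i; rw [mem_zeroSet]; fin_cases i <;> simp [hn1, h1] <;> decide
    rw [this]; decide
  rw [Gmap, hZ]
  funext i
  fin_cases i <;> simp [eVec, Wv] <;> ring

end LW

namespace LW
variable {m : ℕ}

lemma cast_ne (hm : 5 ≤ m) {a : ℕ} (h1 : 0 < a) (h2 : a < m) : (a : ZMod m) ≠ 0 := by
  haveI : NeZero m := ⟨by omega⟩
  rw [Ne, ZMod.natCast_eq_zero_iff]
  exact fun hdvd => absurd (Nat.le_of_dvd h1 hdvd) (by omega)

lemma cast_m (hm : 5 ≤ m) : ((m : ℕ) : ZMod m) = 0 := ZMod.natCast_self m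

lemma run0 (hm : 5 ≤ m) (b : ZMod m) (hb : b ≠ 0) (x0 y0 T : ℕ)
    (hx0 : 0 < x0) (hy0 : 0 < y0) (hxT : x0 + T ≤ m) (hyT : y0 + T ≤ m) :
    ∀ s, s ≤ T → (Gmap m)^[s] (Wv m b ↑x0 ↑y0) = Wv m b ↑(x0+s) ↑(y0+s) := by
  intro s hs
  induction s with
  | zero => simp
  | succ s ih =>
    rw [Function.iterate_succ_apply', ih (by omega)]
    rw [S0 b _ _ hb (cast_ne hm (by omega) (by omega)) (cast_ne hm (by omega) (by omega))]
    congr 1 <;> push_cast <;> ring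

lemma run4 (hm : 5 ≤ m) (x0 T : ℕ) (y0 : ZMod m)
    (hx0 : 0 < x0) (hxT : x0 + T ≤ m) :
    ∀ s, s ≤ T → (Gmap m)^[s] (Wv m 0 ↑x0 y0) = Wv m 0 ↑(x0+s) (y0+2*s) := by
  intro s hs
  induction s with
  | zero => simp
  | succ s ih =>
    rw [Function.iterate_succ_apply', ih (by omega)]
    rw [S4 _ _ (cast_ne hm (by omega) (by omega))]
    congr 1 <;> push_cast <;> ring

end LW

namespace LW
variable {m : ℕ}

def nS (w : Fin 5 → ZMod m) : Prop := ¬(w 0 = 0 ∧ w 3 = 0 ∧ w 4 ≠ 0)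

lemma nS_x {b x y : ZMod m} (hx : x ≠ 0) : nS (Wv m b x y) := fun h => hx h.2.1
lemma nS_y {b x y : ZMod m} (hy : y = 0) : nS (Wv m b x y) := fun h => h.2.2 hy
lemma nS_0 {b x y : ZMod m} (h0 : b + x + y ≠ 0) : nS (Wv m b x y) := by
  intro h
  have h1 : -(b+x+y) = 0 := h.1
  exact h0 (by linear_combination -h1)

lemma blockN (hm : 5 ≤ m) (b : ZMod m) (Y : ℕ) (h2 : 2 ≤ Y) (hY : Y ≤ m-1)
    (hb' : b + 1 ≠ 0) (hc : b + (Y : ZMod m) ≠ 0) :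
    (Gmap m)^[m-1] (Wv m b 0 ↑Y) = Wv m (b+1) 0 ↑(Y-1) ∧
    ∀ t < m-1, nS ((Gmap m)^[t] (Wv m b 0 ↑Y)) := by
  have hY0 : (Y : ZMod m) ≠ 0 := cast_ne hm (by omega) (by omega)
  have e1 : Gmap m (Wv m b 0 ↑Y) = Wv m (b+1) ↑(1:ℕ) ↑(Y+1) := by
    rw [Sev b _ hY0 hc]; congr 1 <;> push_cast <;> ring
  have hA := run0 hm (b+1) hb' 1 (Y+1) (m-1-Y) (by omega) (by omega) (by omega) (by omega)
  have eA : ∀ s ≤ m-1-Y, (Gmap m)^[s+1] (Wv m b 0 ↑Y) = Wv m (b+1) ↑(1+s) ↑(Y+1+s) := by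
    intro s hs
    rw [Function.iterate_add_apply, Function.iterate_one, e1]
    exact hA s hs
  have eA' : (Gmap m)^[(m-1-Y)+1] (Wv m b 0 ↑Y) = Wv m (b+1) ↑(m-Y) 0 := by
    rw [eA (m-1-Y) le_rfl, show 1+(m-1-Y) = m-Y by omega,
      show Y+1+(m-1-Y) = m by omega, cast_m hm]
  have e2 : Gmap m (Wv m (b+1) ↑(m-Y) 0) = Wv m (b+1) ↑(m-Y+2) ↑(1:ℕ) := by
    rw [S3 _ _ hb']; congr 1 <;> push_cast <;> ring
  have hC := run0 hm (b+1) hb' (m-Y+2) 1 (Y-2) (by omega) (by omega) (by omega) (by omega)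
  have eC : ∀ s ≤ Y-2, (Gmap m)^[s+((m-1-Y)+2)] (Wv m b 0 ↑Y)
      = Wv m (b+1) ↑(m-Y+2+s) ↑(1+s) := by
    intro s hs
    rw [Function.iterate_add_apply, show (m-1-Y)+2 = 1+((m-1-Y)+1) by omega,
      Function.iterate_add_apply, Function.iterate_one, eA', e2]
    exact hC s hs
  constructor
  · have := eC (Y-2) le_rfl
    rw [show (Y-2)+((m-1-Y)+2) = m-1 by omega, show m-Y+2+(Y-2) = m by omega,
      cast_m hm, show 1+(Y-2) = Y-1 by omega] at this
    exact this
  · intro t ht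
    rcases Nat.eq_zero_or_pos t with h0 | h0
    · subst h0
      simpa using nS_0 (by simpa using hc)
    rcases Nat.lt_or_ge t ((m-1-Y)+2) with hlt | hge
    · obtain ⟨s, rfl⟩ : ∃ s, t = s+1 := ⟨t-1, by omega⟩
      rw [eA s (by omega)]
      exact nS_x (cast_ne hm (by omega) (by omega))
    · obtain ⟨s, rfl⟩ : ∃ s, t = s+((m-1-Y)+2) := ⟨t-((m-1-Y)+2), by omega⟩
      rw [eC s (by omega)]
      exact nS_x (cast_ne hm (by omega) (by omega))

lemma blockZ (hm : 5 ≤ m) (Y : ℕ) (h2 : 2 ≤ Y) (hY : Y ≤ m-1) :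
    (Gmap m)^[m] (Wv m (-1) 0 ↑Y) = Wv m 0 0 ↑(Y-1) ∧
    ∀ t < m, nS ((Gmap m)^[t] (Wv m (-1) 0 ↑Y)) := by
  have hY0 : (Y : ZMod m) ≠ 0 := cast_ne hm (by omega) (by omega)
  have hc : (-1 : ZMod m) + ↑Y ≠ 0 := by
    have : (-1 : ZMod m) + ↑Y = ((Y-1 : ℕ) : ZMod m) := by
      rw [Nat.cast_sub (by omega)]; push_cast; ring
    rw [this]
    exact cast_ne hm (by omega) (by omega)
  have e1 : Gmap m (Wv m (-1) 0 ↑Y) = Wv m 0 ↑(1:ℕ) ((Y : ZMod m)+1) := by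
    rw [Sev _ _ hY0 hc]; congr 1 <;> push_cast <;> ring
  have hA := run4 hm 1 (m-1) ((Y : ZMod m)+1) (by omega) (by omega)
  have eA : ∀ s ≤ m-1, (Gmap m)^[s+1] (Wv m (-1) 0 ↑Y)
      = Wv m 0 ↑(1+s) ((Y : ZMod m)+1+2*s) := by
    intro s hs
    rw [Function.iterate_add_apply, Function.iterate_one, e1]
    exact hA s hs
  constructor
  · have := eA (m-1) le_rfl
    rw [show (m-1)+1 = m by omega, show 1+(m-1) = m by omega, cast_m hm] at this
    rw [this]
    congr 1
    rw [Nat.cast_sub (by omega : 1 ≤ m), Nat.cast_sub (by omega : 1 ≤ Y), cast_m hm]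
    push_cast
    ring
  · intro t ht
    rcases Nat.eq_zero_or_pos t with h0 | h0
    · subst h0
      simpa using nS_0 (by simpa using hc)
    obtain ⟨s, rfl⟩ : ∃ s, t = s+1 := ⟨t-1, by omega⟩
    rw [eA s (by omega)]
    exact nS_x (cast_ne hm (by omega) (by omega))

lemma blockL (hm : 5 ≤ m) (b : ZMod m) (hb1 : b + 1 ≠ 0) :
    (Gmap m)^[3*m-2] (Wv m b 0 ↑(1:ℕ)) = Wv m (b+1) 0 ↑(m-1) ∧
    ∀ t < 3*m-2, nS ((Gmap m)^[t] (Wv m b 0 ↑(1:ℕ))) := by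
  have h10 : ((1:ℕ) : ZMod m) ≠ 0 := cast_ne hm (by omega) (by omega)
  have hc : b + ((1:ℕ) : ZMod m) ≠ 0 := by push_cast; exact hb1
  have e1 : Gmap m (Wv m b 0 ↑(1:ℕ)) = Wv m (b+1) ↑(1:ℕ) ↑(2:ℕ) := by
    rw [Sev b _ h10 hc]; congr 1 <;> push_cast <;> ring
  have hA := run0 hm (b+1) hb1 1 2 (m-2) (by omega) (by omega) (by omega) (by omega)
  have eA : ∀ s ≤ m-2, (Gmap m)^[s+1] (Wv m b 0 ↑(1:ℕ)) = Wv m (b+1) ↑(1+s) ↑(2+s) := by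
    intro s hs
    rw [Function.iterate_add_apply, Function.iterate_one, e1]
    exact hA s hs
  have eA' : (Gmap m)^[(m-2)+1] (Wv m b 0 ↑(1:ℕ)) = Wv m (b+1) ↑(m-1) 0 := by
    have h1 := eA (m-2) le_rfl
    rw [show 1+(m-2) = m-1 by omega, show 2+(m-2) = m by omega, cast_m hm] at h1
    exact h1
  have e2 : Gmap m (Wv m (b+1) ↑(m-1) 0) = Wv m (b+1) ↑(1:ℕ) ↑(1:ℕ) := by
    rw [S3 _ _ hb1]
    congr 1
    rw [Nat.cast_sub (by omega : 1 ≤ m), cast_m hm]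
    push_cast
    ring
    simp
  have hB := run0 hm (b+1) hb1 1 1 (m-1) (by omega) (by omega) (by omega) (by omega)
  have eB : ∀ s ≤ m-1, (Gmap m)^[s+(1+((m-2)+1))] (Wv m b 0 ↑(1:ℕ))
      = Wv m (b+1) ↑(1+s) ↑(1+s) := by
    intro s hs
    rw [Function.iterate_add_apply, Function.iterate_add_apply, Function.iterate_one, eA', e2]
    exact hB s hs
  have eB' : (Gmap m)^[(m-1)+(1+((m-2)+1))] (Wv m b 0 ↑(1:ℕ)) = Wv m (b+1) 0 0 := by
    have h1 := eB (m-1) le_rfl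
    rw [show 1+(m-1) = m by omega, cast_m hm] at h1
    exact h1
  have e3 : Gmap m (Wv m (b+1) 0 0) = Wv m (b+1) ↑(2:ℕ) ↑(1:ℕ) := by
    rw [S3 _ 0 hb1]; congr 1 <;> push_cast <;> ring
  have hC := run0 hm (b+1) hb1 2 1 (m-2) (by omega) (by omega) (by omega) (by omega)
  have eC : ∀ s ≤ m-2, (Gmap m)^[s+(1+((m-1)+(1+((m-2)+1))))] (Wv m b 0 ↑(1:ℕ))
      = Wv m (b+1) ↑(2+s) ↑(1+s) := by
    intro s hs
    rw [Function.iterate_add_apply, Function.iterate_add_apply, Function.iterate_one, eB', e3]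
    exact hC s hs
  constructor
  · have h1 := eC (m-2) le_rfl
    rw [show 2+(m-2) = m by omega, cast_m hm, show 1+(m-2) = m-1 by omega] at h1
    rw [show 3*m-2 = (m-2)+(1+((m-1)+(1+((m-2)+1)))) by omega]
    exact h1
  · intro t ht
    rcases Nat.eq_zero_or_pos t with h0 | h0
    · subst h0
      simpa using nS_0 (by simpa using hc)
    rcases Nat.lt_or_ge t ((m-2)+2) with hlt | hge
    · obtain ⟨s, rfl⟩ : ∃ s, t = s+1 := ⟨t-1, by omega⟩
      rw [eA s (by omega)]
      exact nS_x (cast_ne hm (by omega) (by omega))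
    rcases Nat.lt_or_ge t (2*m-1) with hlt2 | hge2
    · obtain ⟨s, rfl⟩ : ∃ s, t = s+(1+((m-2)+1)) := ⟨t-(1+((m-2)+1)), by omega⟩
      rw [eB s (by omega)]
      exact nS_x (cast_ne hm (by omega) (by omega))
    rcases Nat.eq_or_lt_of_le hge2 with heq | hlt3
    · have h1 : t = (m-1)+(1+((m-2)+1)) := by omega
      subst h1
      rw [eB']
      exact nS_y rfl
    · obtain ⟨s, rfl⟩ : ∃ s, t = s+(1+((m-1)+(1+((m-2)+1)))) :=
        ⟨t-(1+((m-1)+(1+((m-2)+1)))), by omega⟩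
      rw [eC s (by omega)]
      exact nS_x (cast_ne hm (by omega) (by omega))

lemma prelude (hm : 5 ≤ m) :
    (Gmap m)^[2*m] (![0, 0, -1, 0, 1] : Fin 5 → ZMod m) = Wv m 0 0 ↑(m-1) ∧
    ∀ t, 0 < t → t < 2*m → nS ((Gmap m)^[t] (![0, 0, -1, 0, 1] : Fin 5 → ZMod m)) := by
  have h10 : ((1:ℕ) : ZMod m) ≠ 0 := cast_ne hm (by omega) (by omega)
  have h1' : (1 : ZMod m) ≠ 0 := by simpa using h10
  have hm1 : ((m-1 : ℕ) : ZMod m) = -1 := by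
    rw [Nat.cast_sub (by omega : 1 ≤ m), cast_m hm]; ring
  have e1 : Gmap m (![0, 0, -1, 0, 1] : Fin 5 → ZMod m) = Wv m 0 ↑(1:ℕ) (2 : ZMod m) := by
    rw [Sstart h1']; congr 1 <;> push_cast <;> ring
  have hA := run4 hm 1 (m-1) (2 : ZMod m) (by omega) (by omega)
  have eA : ∀ s ≤ m-1, (Gmap m)^[s+1] (![0, 0, -1, 0, 1] : Fin 5 → ZMod m)
      = Wv m 0 ↑(1+s) ((2 : ZMod m)+2*s) := by
    intro s hs
    rw [Function.iterate_add_apply, Function.iterate_one, e1]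
    exact hA s hs
  have eA' : (Gmap m)^[(m-1)+1] (![0, 0, -1, 0, 1] : Fin 5 → ZMod m) = Wv m 0 0 0 := by
    have h1 := eA (m-1) le_rfl
    rw [show 1+(m-1) = m by omega, cast_m hm, hm1] at h1
    rw [h1]
    congr 1
    ring
  have e2 : Gmap m (Wv m 0 0 0) = Wv m 0 ↑(1:ℕ) (1 : ZMod m) := by
    rw [Szero]; congr 1 <;> push_cast <;> ring
  have hB := run4 hm 1 (m-1) (1 : ZMod m) (by omega) (by omega)
  have eB : ∀ s ≤ m-1, (Gmap m)^[s+(1+((m-1)+1))] (![0, 0, -1, 0, 1] : Fin 5 → ZMod m)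
      = Wv m 0 ↑(1+s) ((1 : ZMod m)+2*s) := by
    intro s hs
    rw [Function.iterate_add_apply, Function.iterate_add_apply, Function.iterate_one, eA', e2]
    exact hB s hs
  constructor
  · have h1 := eB (m-1) le_rfl
    rw [show 1+(m-1) = m by omega, cast_m hm, hm1] at h1
    rw [show 2*m = (m-1)+(1+((m-1)+1)) by omega, h1, hm1]
    congr 1
    ring
  · intro t h0 ht
    rcases Nat.lt_or_ge t ((m-1)+1) with hlt | hge
    · obtain ⟨s, rfl⟩ : ∃ s, t = s+1 := ⟨t-1, by omega⟩
      rw [eA s (by omega)]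
      exact nS_x (cast_ne hm (by omega) (by omega))
    rcases Nat.eq_or_lt_of_le hge with heq | hlt2
    · have h1 : t = (m-1)+1 := by omega
      subst h1
      rw [eA']
      exact nS_y rfl
    · obtain ⟨s, rfl⟩ : ∃ s, t = s+(1+((m-1)+1)) := ⟨t-(1+((m-1)+1)), by omega⟩
      rw [eB s (by omega)]
      exact nS_x (cast_ne hm (by omega) (by omega))

end LW

namespace LW
variable {m : ℕ}

def kstep (m n : ℕ) : ℕ := 2*m + (m-1)*n + (2*m-1)*(n/(m-1)) + n/m

lemma div_le (hm : 5 ≤ m) {k : ℕ} (hk : k ≤ m*(m-2)) : k/(m-1) ≤ m-2 := by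
  have h1 : m*(m-2) < (m-1)*(m-1) := by
    obtain ⟨M, rfl⟩ : ∃ M, m = M+5 := ⟨m-5, by omega⟩
    show (M+5)*(M+3) < (M+4)*(M+4)
    nlinarith
  have h2 : k/(m-1) < m-1 :=
    (Nat.div_lt_iff_lt_mul (show 0 < m-1 by omega)).mpr (lt_of_le_of_lt hk h1)
  omega

lemma cast_m1 (hm : 5 ≤ m) : ((m-1 : ℕ) : ZMod m) = -1 := by
  rw [Nat.cast_sub (show 1 ≤ m by omega), ZMod.natCast_self]
  ring

lemma Ev_nonzero (hm : 5 ≤ m) {k : ℕ} (hk : k ≤ m*(m-2)) :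
    ((k : ZMod m)) + ((m-1-k%(m-1) : ℕ) : ZMod m) ≠ 0 := by
  obtain ⟨q, r, hqr, hr, hq, hrmod⟩ :
      ∃ q r, (m-1)*q + r = k ∧ r < m-1 ∧ k/(m-1) = q ∧ k%(m-1) = r :=
    ⟨_, _, Nat.div_add_mod k (m-1), Nat.mod_lt _ (by omega), rfl, rfl⟩
  have hqle : q ≤ m-2 := hq ▸ div_le hm hk
  rw [hrmod]
  have key : ((k : ZMod m)) + ((m-1-r : ℕ) : ZMod m) = -(((q+1 : ℕ)) : ZMod m) := by
    rw [show ((k:ℕ) : ZMod m) = (((m-1)*q+r : ℕ) : ZMod m) by rw [hqr],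
      Nat.cast_sub (show r ≤ m-1 by omega), Nat.cast_add, Nat.cast_mul, cast_m1 hm]
    push_cast
    ring
  rw [key, neg_ne_zero]
  exact cast_ne hm (by omega) (by omega)

lemma crt1 (hm : 5 ≤ m) {n : ℕ} (hn : n < m*(m-2)) (h1 : n % m = m-1) :
    n % (m-1) ≠ m-2 := by
  obtain ⟨M, rfl⟩ : ∃ M, m = M+5 := ⟨m-5, by omega⟩
  have hn' : n < (M+5)*(M+3) := hn
  set a := n/(M+5) with ha
  have hdm := Nat.div_add_mod n (M+5)
  rw [h1] at hdm
  have hdm' : (M+5)*a + (M+4) = n := hdm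
  have haub : a ≤ M+2 := by
    by_contra hcon
    have h3 : (M+5)*(M+3) ≤ (M+5)*a := Nat.mul_le_mul_left _ (by omega)
    omega
  have e1 : (M+4)*(a+1) = (M+4)*a + (M+4) := by ring
  have e2 : (M+5)*a = (M+4)*a + a := by ring
  have hn2 : n = a + (M+4)*(a+1) := by omega
  have hmod : n % (M+4) = a := by
    rw [hn2, Nat.add_mul_mod_self_left, Nat.mod_eq_of_lt (by omega)]
  have hmod' : n % (M+5-1) = a := hmod
  intro hcontra
  rw [hmod'] at hcontra
  omega

lemma crt2 (hm : 5 ≤ m) {n : ℕ} (hn : n < m*(m-2)) (h1 : n % m = 0) :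
    n % (m-1) ≠ m-2 := by
  obtain ⟨M, rfl⟩ : ∃ M, m = M+5 := ⟨m-5, by omega⟩
  have hn' : n < (M+5)*(M+3) := hn
  set a := n/(M+5) with ha
  have hdm := Nat.div_add_mod n (M+5)
  rw [h1] at hdm
  have hdm' : (M+5)*a + 0 = n := hdm
  have haub : a ≤ M+2 := by
    by_contra hcon
    have h3 : (M+5)*(M+3) ≤ (M+5)*a := Nat.mul_le_mul_left _ (by omega)
    omega
  have e2 : (M+5)*a = (M+4)*a + a := by ring
  have hn2 : n = a + (M+4)*a := by omega
  have hmod : n % (M+4) = a := by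
    rw [hn2, Nat.add_mul_mod_self_left, Nat.mod_eq_of_lt (by omega)]
  have hmod' : n % (M+5-1) = a := hmod
  intro hcontra
  rw [hmod'] at hcontra
  omega

lemma succ_mod_m {n : ℕ} (hm : 5 ≤ m) (h : n % m ≤ m-2) : (n+1) % m = n % m + 1 := by
  rw [← Nat.mod_add_mod, Nat.mod_eq_of_lt (by omega)]

end LW

namespace LW
variable {m : ℕ}

lemma master (hm : 5 ≤ m) :
    ∀ n, n ≤ m*(m-2) →
      (Gmap m)^[kstep m n] (![0, 0, -1, 0, 1] : Fin 5 → ZMod m)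
        = Wv m ↑n 0 ↑(m-1-n%(m-1)) ∧
      ∀ t, 0 < t → t ≤ kstep m n →
        nS ((Gmap m)^[t] (![0, 0, -1, 0, 1] : Fin 5 → ZMod m)) := by
  haveI : NeZero m := ⟨by omega⟩
  intro n
  induction n with
  | zero =>
    intro _
    have hp := prelude hm
    have hk0 : kstep m 0 = 2*m := by simp [kstep]
    constructor
    · rw [hk0, hp.1]
      norm_num
    · intro t ht hle
      rw [hk0] at hle
      rcases eq_or_lt_of_le hle with heq | hlt
      · rw [heq, hp.1]
        exact nS_0 (by simpa using cast_ne hm (show 0 < m-1 by omega) (by omega))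
      · exact hp.2 t ht hlt
  | succ n ih =>
    intro hn1
    have hn : n ≤ m*(m-2) := by omega
    obtain ⟨IH1, IH2⟩ := ih hn
    obtain ⟨q, r, hqr, hr, hq, hrmod⟩ :
        ∃ q r, (m-1)*q + r = n ∧ r < m-1 ∧ n/(m-1) = q ∧ n%(m-1) = r :=
      ⟨_, _, Nat.div_add_mod n (m-1), Nat.mod_lt _ (by omega), rfl, rfl⟩
    obtain ⟨a, hma, ha2, hadiv⟩ :
        ∃ a, m*a + n%m = n ∧ n%m < m ∧ n/m = a :=
      ⟨_, Nat.div_add_mod n m, Nat.mod_lt _ (by omega), rfl⟩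
    have hqle : q ≤ m-2 := hq ▸ div_le hm hn
    have hq1le : (n+1)/(m-1) ≤ m-2 := div_le hm hn1
    rw [hrmod] at IH1
    -- case split
    by_cases hA : r = m-2
    · -- long block
      have hndvd : ¬ m ∣ n := by
        intro hd
        exact crt2 hm (by omega) (Nat.mod_eq_zero_of_dvd hd)
          (by rw [hrmod]; omega)
      have hndvd1 : ¬ m ∣ (n+1) := by
        intro hd
        have h0 : (n+1) % m = 0 := Nat.mod_eq_zero_of_dvd hd
        have hnm : n % m = m-1 := by
          by_contra hne
          rw [succ_mod_m hm (by omega)] at h0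
          omega
        exact crt1 hm (by omega) hnm (by rw [hrmod]; omega)
      have hcast_n1 : ((n:ℕ) : ZMod m) + 1 ≠ 0 := by
        have he : ((n:ℕ) : ZMod m) + 1 = ((n+1 : ℕ) : ZMod m) := by push_cast; ring
        rw [he, Ne, ZMod.natCast_eq_zero_iff]
        exact hndvd1
      have hbl := blockL hm (↑n) hcast_n1
      have hEv : m-1-r = 1 := by omega
      rw [hEv] at IH1
      have hrep : n+1 = (m-1)*(q+1) := by
        have e : (m-1)*(q+1) = (m-1)*q + (m-1) := Nat.mul_succ _ _
        omega
      have hd1 : (n+1)/(m-1) = q+1 := by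
        rw [hrep, Nat.mul_div_cancel_left _ (show 0 < m-1 by omega)]
      have hmod1 : (n+1)%(m-1) = 0 := by rw [hrep]; exact Nat.mul_mod_right _ _
      have hd2 : (n+1)/m = a := by
        rw [Nat.succ_div, if_neg hndvd1]
        simpa using hadiv
      have hks : kstep m (n+1) = (3*m-2) + kstep m n := by
        rw [kstep, kstep, hd1, hd2, hq, hadiv]
        have e1 : (m-1)*(n+1) = (m-1)*n + (m-1) := Nat.mul_succ _ _
        have e2 : (2*m-1)*(q+1) = (2*m-1)*q + (2*m-1) := Nat.mul_succ _ _
        omega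
      constructor
      · rw [hks, Function.iterate_add_apply, IH1, hbl.1, hmod1, Nat.sub_zero,
          show ((n+1:ℕ) : ZMod m) = ((n:ℕ) : ZMod m)+1 by push_cast; ring]
      · intro t ht hle
        rcases le_or_gt t (kstep m n) with h1 | h1
        · exact IH2 t ht h1
        obtain ⟨s, rfl⟩ : ∃ s, t = s + kstep m n := ⟨t - kstep m n, by omega⟩
        rw [Function.iterate_add_apply, IH1]
        rcases lt_or_ge s (3*m-2) with h2 | h2
        · exact hbl.2 s h2
        · have hseq : s = 3*m-2 := by rw [hks] at hle; omega
          rw [hseq, hbl.1]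
          have hnz := Ev_nonzero hm hn1
          rw [hmod1] at hnz
          apply nS_0
          intro hcon
          apply hnz
          rw [Nat.sub_zero]
          push_cast at hcon ⊢
          linear_combination hcon
    · -- r ≤ m-3 here
      have hrle : r ≤ m-3 := by omega
      have hmodstep : (n+1)%(m-1) = r+1 := by
        have hrep2 : n+1 = (r+1) + (m-1)*q := by omega
        rw [hrep2, Nat.add_mul_mod_self_left, Nat.mod_eq_of_lt (by omega)]
      have hd1 : (n+1)/(m-1) = q := by
        have hrep2 : n+1 = (r+1) + (m-1)*q := by omega
        rw [hrep2, Nat.add_mul_div_left _ _ (show 0 < m-1 by omega),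
          Nat.div_eq_of_lt (by omega), Nat.zero_add]
      by_cases hB : n % m = m-1
      · -- Z block
        have hdvdm : m ∣ (n+1) := by
          refine ⟨a + 1, ?_⟩
          have e : m*(a+1) = m*a + m := Nat.mul_succ _ _
          omega
        have hd2 : (n+1)/m = a+1 := by
          rw [show n+1 = m*(a+1) by have e : m*(a+1) = m*a + m := Nat.mul_succ _ _; omega,
            Nat.mul_div_cancel_left _ (show 0 < m by omega)]
        have castn : ((n:ℕ) : ZMod m) = -1 := by
          rw [show ((n:ℕ) : ZMod m) = ((m*a + (m-1) : ℕ) : ZMod m) by rw [← hma, hB],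
            Nat.cast_add, Nat.cast_mul, ZMod.natCast_self, cast_m1 hm]
          ring
        have castn1 : ((n+1:ℕ) : ZMod m) = 0 := by
          rw [ZMod.natCast_eq_zero_iff]
          exact hdvdm
        have hbz := blockZ hm (m-1-r) (by omega) (by omega)
        rw [castn] at IH1
        have hks : kstep m (n+1) = m + kstep m n := by
          rw [kstep, kstep, hd1, hd2, hq, hadiv]
          have e1 : (m-1)*(n+1) = (m-1)*n + (m-1) := Nat.mul_succ _ _
          omega
        constructor
        · rw [hks, Function.iterate_add_apply, IH1, hbz.1, hmodstep, castn1,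
            show m-1-(r+1) = m-1-r-1 by omega]
        · intro t ht hle
          rcases le_or_gt t (kstep m n) with h1 | h1
          · exact IH2 t ht h1
          obtain ⟨s, rfl⟩ : ∃ s, t = s + kstep m n := ⟨t - kstep m n, by omega⟩
          rw [Function.iterate_add_apply, IH1]
          rcases lt_or_ge s m with h2 | h2
          · exact hbz.2 s h2
          · have hseq : s = m := by rw [hks] at hle; omega
            rw [hseq, hbz.1]
            have hnz := Ev_nonzero hm hn1
            rw [hmodstep] at hnz
            apply nS_0
            intro hcon
            apply hnz
            rw [castn1, show m-1-(r+1) = m-1-r-1 by omega]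
            push_cast at hcon ⊢
            linear_combination hcon
      · -- normal block
        have hBle : n % m ≤ m-2 := by omega
        have hndvd1 : ¬ m ∣ (n+1) := by
          intro hd
          have h0 : (n+1) % m = 0 := Nat.mod_eq_zero_of_dvd hd
          rw [succ_mod_m hm hBle] at h0
          omega
        have hd2 : (n+1)/m = a := by
          rw [Nat.succ_div, if_neg hndvd1]
          simpa using hadiv
        have hcast_n1 : ((n:ℕ) : ZMod m) + 1 ≠ 0 := by
          have he : ((n:ℕ) : ZMod m) + 1 = ((n+1 : ℕ) : ZMod m) := by push_cast; ring
          rw [he, Ne, ZMod.natCast_eq_zero_iff]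
          exact hndvd1
        have hc : ((n:ℕ) : ZMod m) + ((m-1-r : ℕ) : ZMod m) ≠ 0 := by
          have := Ev_nonzero hm hn
          rwa [hrmod] at this
        have hbn := blockN hm (↑n) (m-1-r) (by omega) (by omega) hcast_n1 hc
        have hks : kstep m (n+1) = (m-1) + kstep m n := by
          rw [kstep, kstep, hd1, hd2, hq, hadiv]
          have e1 : (m-1)*(n+1) = (m-1)*n + (m-1) := Nat.mul_succ _ _
          omega
        constructor
        · rw [hks, Function.iterate_add_apply, IH1, hbn.1, hmodstep,
            show m-1-(r+1) = m-1-r-1 by omega,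
            show ((n+1:ℕ) : ZMod m) = ((n:ℕ) : ZMod m)+1 by push_cast; ring]
        · intro t ht hle
          rcases le_or_gt t (kstep m n) with h1 | h1
          · exact IH2 t ht h1
          obtain ⟨s, rfl⟩ : ∃ s, t = s + kstep m n := ⟨t - kstep m n, by omega⟩
          rw [Function.iterate_add_apply, IH1]
          rcases lt_or_ge s (m-1) with h2 | h2
          · exact hbn.2 s h2
          · have hseq : s = m-1 := by rw [hks] at hle; omega
            rw [hseq, hbn.1]
            have hnz := Ev_nonzero hm hn1
            rw [hmodstep] at hnz
            apply nS_0
            intro hcon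
            apply hnz
            rw [show m-1-(r+1) = m-1-r-1 by omega]
            push_cast at hcon ⊢
            linear_combination hcon

end LW

/-- **Long wrap.** For odd `m ≥ 5`, the orbit of `x⋆ = (0,0,−1,0,1)` under `G` first
returns to the section `Σ = {w : w_0 = 0, w_3 = 0, w_4 ≠ 0}` after exactly
`m³ − (m−1)(m−2)` steps, at the point `(0,1,0,0,−1)`. -/
theorem long_wrap (m : ℕ) (hm : 5 ≤ m) (hodd : Odd m) :
    (Gmap m)^[m ^ 3 - (m - 1) * (m - 2)] ![0, 0, -1, 0, 1] = ![0, 1, 0, 0, -1] ∧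
    (![0, 1, 0, 0, -1] : Fin 5 → ZMod m) ∈
      {w : Fin 5 → ZMod m | w 0 = 0 ∧ w 3 = 0 ∧ w 4 ≠ 0} ∧
    (∀ k : ℕ, 0 < k → k < m ^ 3 - (m - 1) * (m - 2) →
      (Gmap m)^[k] ![0, 0, -1, 0, 1] ∉
        {w : Fin 5 → ZMod m | w 0 = 0 ∧ w 3 = 0 ∧ w 4 ≠ 0}) := by
  haveI : NeZero m := ⟨by omega⟩
  have h1ne : (1 : ZMod m) ≠ 0 := by
    simpa using LW.cast_ne hm (show 0 < 1 by omega) (by omega)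
  set n₀ := m*(m-2) with hn₀
  -- facts about n₀
  have hrepC : n₀ = (m-1)*(m-2) + (m-2) := by
    have e : m*(m-2) = (m-1)*(m-2) + (m-2) := by
      have e2 : ((m-1)+1)*(m-2) = (m-1)*(m-2)+(m-2) := Nat.succ_mul _ _
      have e3 : (m-1)+1 = m := by omega
      rw [← e3]
      exact e2
    exact e
  have hmod₀ : n₀ % (m-1) = m-2 := by
    rw [hrepC, Nat.mul_add_mod, Nat.mod_eq_of_lt (by omega)]
  have hdiv₀ : n₀ / (m-1) = m-2 := by
    rw [hrepC, Nat.mul_add_div (show 0 < m-1 by omega),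
      Nat.div_eq_of_lt (by omega : m-2 < m-1)]
    omega
  have hdivm₀ : n₀ / m = m-2 := Nat.mul_div_cancel_left _ (by omega)
  have hcast₀ : ((n₀ : ℕ) : ZMod m) = 0 := by
    rw [ZMod.natCast_eq_zero_iff]
    exact ⟨m-2, rfl⟩
  -- master at n₀
  obtain ⟨hM1, hM2⟩ := LW.master hm n₀ le_rfl
  rw [hmod₀, hcast₀, show m-1-(m-2) = 1 by omega] at hM1
  -- terminal block
  have hbl := LW.blockL hm (0 : ZMod m) (by simpa using h1ne)
  -- total step count
  have hkval : LW.kstep m n₀ = 2*m + (m-1)*(m*(m-2)) + (2*m-1)*(m-2) + (m-2) := by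
    rw [LW.kstep, hdiv₀, hdivm₀]
  have hN : m ^ 3 - (m - 1) * (m - 2) = (3*m-2) + LW.kstep m n₀ := by
    rw [hkval]
    obtain ⟨M, rfl⟩ : ∃ M, m = M+5 := ⟨m-5, by omega⟩
    have e1 : M+5-1 = M+4 := rfl
    have e2 : M+5-2 = M+3 := rfl
    have e3 : 2*(M+5)-1 = 2*M+9 := by omega
    have e4 : 3*(M+5)-2 = 3*M+13 := by omega
    rw [e1, e2, e3, e4]
    have h5 : (M+5)^2 ≤ (M+5)^3 := Nat.pow_le_pow_right (by omega) (by omega)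
    have hle : (M+4)*(M+3) ≤ (M+5)^3 := by nlinarith [h5]
    rw [Nat.sub_eq_iff_eq_add hle]
    ring
  have hfin : (Gmap m)^[m ^ 3 - (m - 1) * (m - 2)] (![0, 0, -1, 0, 1] : Fin 5 → ZMod m)
      = Wv m (0+1) 0 ↑(m-1) := by
    rw [hN, Function.iterate_add_apply, hM1, hbl.1]
  have htgt : Wv m (0+1) 0 ((m-1 : ℕ) : ZMod m) = (![0, 1, 0, 0, -1] : Fin 5 → ZMod m) := by
    have hm1 := LW.cast_m1 hm
    funext i
    fin_cases i <;> simp [Wv, hm1] <;> ring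
  refine ⟨by rw [hfin, htgt], ⟨rfl, rfl, by simpa using h1ne⟩, ?_⟩
  intro k hk0 hkN
  rw [Set.mem_setOf_eq]
  rcases le_or_gt k (LW.kstep m n₀) with hle | hlt
  · exact hM2 k hk0 hle
  · obtain ⟨s, rfl⟩ : ∃ s, k = s + LW.kstep m n₀ := ⟨k - LW.kstep m n₀, by omega⟩
    rw [Function.iterate_add_apply, hM1]
    have hs : s < 3*m-2 := by rw [hN] at hkN; omega
    exact hbl.2 s hs
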